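/- Let A and B be real positive definite (symmetric) n×n matrices and let P be an n×n permutation matrix such that AP = PA. Then tr(ABP) = tr(AB) if and only if P is the identity matrix. -/

import Mathlib

open Matrix
open scoped MatrixOrder



private lemma perm_mul_transpose (m : ℕ) (σ : Equiv.Perm (Fin m)) :
    (σ.permMatrix ℝ) * (σ.permMatrix ℝ)ᵀ = 1 := by
  rw [← PEquiv.toMatrix_symm, ← PEquiv.toMatrix_trans, ← Equiv.toPEquiv_symm,
    ← Equiv.toPEquiv_trans]
  simp

private lemma key_posdef (m : ℕ) (S B : Matrix (Fin m) (Fin m) ℝ)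
    (hS : S.IsHermitian) (hSinj : ∀ x : Fin m → ℝ, S *ᵥ x = 0 → x = 0)
    (hB : B.PosDef) : (S * B * S).PosDef := by
  have h : (Sᴴ * B * S).PosDef := by
    refine PosDef.of_dotProduct_mulVec_pos ?_ ?_
    · exact isHermitian_conjTranspose_mul_mul S hB.1
    · intro x hx
      have hSx : S *ᵥ x ≠ 0 := fun h => hx (hSinj x h)
      simpa only [star_mulVec, dotProduct_mulVec, vecMul_vecMul] using hB.dotProduct_mulVec_pos hSx
  rwa [hS.eq] at h

private lemma posdef_offdiag_lt (m : ℕ) (C : Matrix (Fin m) (Fin m) ℝ)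
    (hC : C.PosDef) {i j : Fin m} (hij : i ≠ j) :
    2 * C i j < C i i + C j j := by
  set x : Fin m → ℝ := Pi.single i 1 - Pi.single j 1 with hxdef
  have hx : x ≠ 0 := by
    intro h
    have := congrFun h i
    simp [hxdef, Pi.single_apply, hij] at this
  have hpos := hC.dotProduct_mulVec_pos hx
  have hsym : C j i = C i j := by
    have := congrFun (congrFun hC.1 i) j
    simpa [conjTranspose_apply] using this
  have hst : star x = x := by simp
  rw [hst] at hpos
  have hcalc : x ⬝ᵥ C *ᵥ x = C i i + C j j - 2 * C i j := by
    simp only [hxdef, mulVec_sub, mulVec_single_one, col_apply, sub_dotProduct, dotProduct_sub,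
      single_dotProduct]
    simp only [mul_one, one_mul]
    ring_nf
    rw [hsym]
    ring
  rw [hcalc] at hpos
  linarith

private lemma trace_mul_perm_eq_iff (m : ℕ) (C : Matrix (Fin m) (Fin m) ℝ)
    (hC : C.PosDef) (σ : Equiv.Perm (Fin m)) :
    (C * σ.permMatrix ℝ).trace = C.trace ↔ (σ.permMatrix ℝ : Matrix (Fin m) (Fin m) ℝ) = 1 := by
  constructor
  · intro htr
    have hCP : C * σ.permMatrix ℝ = C.submatrix id σ.symm :=
      PEquiv.mul_toMatrix_toPEquiv C σ
    have htr' : ∑ i, C i (σ.symm i) = ∑ i, C i i := by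
      simpa [hCP, Matrix.trace, Matrix.diag] using htr
    have hfix : ∀ i, σ.symm i = i := by
      by_contra hne
      push_neg at hne
      obtain ⟨k, hk⟩ := hne
      have hle : ∀ i ∈ Finset.univ, 2 * C i (σ.symm i) ≤ C i i + C (σ.symm i) (σ.symm i) := by
        intro i _
        rcases eq_or_ne (σ.symm i) i with h | h
        · rw [h]; ring_nf; rfl
        · exact le_of_lt (posdef_offdiag_lt m C hC (Ne.symm h))
      have hlt : ∑ i, 2 * C i (σ.symm i) < ∑ i, (C i i + C (σ.symm i) (σ.symm i)) :=
        Finset.sum_lt_sum hle ⟨k, Finset.mem_univ k,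
          posdef_offdiag_lt m C hC (Ne.symm hk)⟩
      have hre : ∑ i, C (σ.symm i) (σ.symm i) = ∑ i, C i i :=
        Equiv.sum_comp σ.symm (fun i => C i i)
      rw [Finset.sum_add_distrib, hre, ← Finset.mul_sum, ← htr'] at hlt
      linarith
    have hσ : σ = 1 := Equiv.ext fun i => by
      have h := hfix (σ i)
      rw [Equiv.symm_apply_apply] at h
      simpa using h.symm
    rw [hσ]
    show ((1 : Equiv.Perm (Fin m)).toPEquiv.toMatrix : Matrix (Fin m) (Fin m) ℝ) = 1
    rw [show (1 : Equiv.Perm (Fin m)) = Equiv.refl (Fin m) from rfl, Equiv.toPEquiv_refl,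
      PEquiv.toMatrix_refl]
  · intro h
    rw [h, Matrix.mul_one]

/-- If `A` and `B` are real positive definite `n × n` matrices and `P` is a permutation
matrix commuting with `A`, then `tr(ABP) = tr(AB)` if and only if `P = 1`. -/
theorem trace_perm_eq_iff (n : ℕ) (A B P : Matrix (Fin n) (Fin n) ℝ)
    (hA : A.PosDef) (hB : B.PosDef)
    (hP : ∃ σ : Equiv.Perm (Fin n), P = σ.permMatrix ℝ)
    (hcomm : A * P = P * A) :
    (A * B * P).trace = (A * B).trace ↔ P = 1 := by
  obtain ⟨σ, rfl⟩ := hP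
  set Pm : Matrix (Fin n) (Fin n) ℝ := σ.permMatrix ℝ with hPm
  have hPPt : Pm * Pmᵀ = 1 := perm_mul_transpose n σ
  have hPtP : Pmᵀ * Pm = 1 := mul_eq_one_comm.mp hPPt
  have hAps := hA.posSemidef
  set S : Matrix (Fin n) (Fin n) ℝ := CFC.sqrt A with hSdef
  have hSps : S.PosSemidef := (CFC.sqrt_nonneg A).posSemidef
  have hSS : S * S = A := CFC.sqrt_mul_sqrt_self A hAps.nonneg
  clear_value S
  have hSinj : ∀ x : Fin n → ℝ, S *ᵥ x = 0 → x = 0 := by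
    intro x hx
    by_contra hx0
    have h1 : A *ᵥ x = 0 := by rw [← hSS, ← mulVec_mulVec, hx, mulVec_zero]
    have := hA.dotProduct_mulVec_pos hx0
    rw [h1] at this
    simp at this
  -- commutation of S with Pm
  have hPmH : Pmᴴ = Pmᵀ := conjTranspose_eq_transpose_of_trivial Pm
  have hTps : (Pm * S * Pmᵀ).PosSemidef := by
    have := hSps.mul_mul_conjTranspose_same Pm
    rwa [hPmH] at this
  have hTsq : (Pm * S * Pmᵀ) ^ 2 = S ^ 2 := by
    have : (Pm * S * Pmᵀ) * (Pm * S * Pmᵀ) = Pm * A * Pmᵀ := by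
      calc (Pm * S * Pmᵀ) * (Pm * S * Pmᵀ)
          = Pm * S * (Pmᵀ * Pm) * S * Pmᵀ := by simp only [Matrix.mul_assoc]
        _ = Pm * (S * S) * Pmᵀ := by rw [hPtP]; simp only [Matrix.mul_one, Matrix.mul_assoc]
        _ = Pm * A * Pmᵀ := by rw [hSS]
    rw [pow_two, pow_two, this, hSS, ← hcomm, Matrix.mul_assoc, hPPt, Matrix.mul_one]
  have hT : Pm * S * Pmᵀ = S := by
    rw [← CFC.sqrt_sq (Pm * S * Pmᵀ) hTps.nonneg, hTsq, CFC.sqrt_sq S hSps.nonneg]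
  have hPS : Pm * S = S * Pm := by
    have := congrArg (· * Pm) hT
    simpa [Matrix.mul_assoc, hPtP] using this
  -- reduce traces to C = S * B * S
  have htr1 : (A * B * Pm).trace = (S * B * S * Pm).trace := by
    rw [← hSS]
    rw [show S * S * B * Pm = S * (S * B * Pm) by simp only [Matrix.mul_assoc],
      Matrix.trace_mul_comm,
      show S * B * Pm * S = S * B * (Pm * S) by simp only [Matrix.mul_assoc], hPS,
      show S * B * (S * Pm) = S * B * S * Pm by simp only [Matrix.mul_assoc]]
  have htr2 : (A * B).trace = (S * B * S).trace := by
    rw [← hSS, show S * S * B = S * (S * B) by simp only [Matrix.mul_assoc],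
      Matrix.trace_mul_comm, show S * B * S = S * B * S from rfl]
  have hC : (S * B * S).PosDef := key_posdef n S B hSps.1 hSinj hB
  rw [htr1, htr2]
  exact trace_mul_perm_eq_iff n (S * B * S) hC σ
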